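/- Let h be a dilation on R^n with ordered weights r_1 ≤ ... ≤ r_n satisfying ℓ := r_n - 2r_{n-1} ≥ 0, and let A = (a_i^j)_{i,j=1}^{n-1} be a nonzero symmetric real matrix with a_i^j = 0 unless r_i = r_j = r_{n-1}. Then the unique linear map D_ℓ^A of weight ℓ on 𝔪 = g_{<0}(h) that vanishes on constant vector fields, satisfies D_ℓ^A(x_i ∂_j) = δ_j^n Σ_k a_i^k ∂_k on linear vector fields, and obeys D_ℓ^A(fg ∂_j) = f D_ℓ^A(g ∂_j) + g D_ℓ^A(f ∂_j) for polynomials f, g, is a derivation of the Lie algebra 𝔪, i.e. D_ℓ^A([X,Y]) = [D_ℓ^A(X),Y] + [X,D_ℓ^A(Y)] for all X,Y ∈ 𝔪. -/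

import Mathlib

open MvPolynomial

/-- Polynomial vector fields on ℝⁿ, given by their coefficient polynomials. -/
abbrev VF (n : ℕ) := Fin n → MvPolynomial (Fin n) ℝ

/-- Lie bracket of polynomial vector fields. -/
noncomputable def bracket {n : ℕ} (V W : VF n) : VF n :=
  fun i => ∑ j, (V j * pderiv j (W i) - W j * pderiv j (V i))

/-- The weight (Euler) vector field ∇ʰ = Σᵢ rᵢ xⁱ ∂ᵢ of the dilation with weights r. -/
noncomputable def nabla {n : ℕ} (r : Fin n → ℕ) : VF n :=
  fun i => (r i : MvPolynomial (Fin n) ℝ) * X i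

/-- A polynomial vector field is homogeneous of weight `a` w.r.t. the dilation `r`. -/
def IsHomog {n : ℕ} (r : Fin n → ℕ) (a : ℤ) (V : VF n) : Prop :=
  bracket (nabla r) V = fun i => (a : ℝ) • V i

/-- The coordinate vector field ∂ᵢ. -/
noncomputable def coordVF {n : ℕ} (i : Fin n) : VF n := fun k => if k = i then 1 else 0

/-- The vector field f ∂ⱼ. -/
noncomputable def vfOf {n : ℕ} (f : MvPolynomial (Fin n) ℝ) (j : Fin n) : VF n :=
  fun k => if k = j then f else 0

/-- 𝔪 = g₋(h): the span of homogeneous polynomial vector fields of negative weight. -/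
noncomputable def negPart {n : ℕ} (r : Fin n → ℕ) : Submodule ℝ (VF n) :=
  Submodule.span ℝ {V : VF n | ∃ k : ℤ, k < 0 ∧ IsHomog r k V}

/-! ### Auxiliary lemmas -/


theorem pd_comm {σ : Type*} [DecidableEq σ] (i j : σ) (f : MvPolynomial σ ℝ) :
    pderiv i (pderiv j f) = pderiv j (pderiv i f) := by
  induction f using MvPolynomial.induction_on' with
  | add p q hp hq => simp [hp, hq]
  | monomial s c =>
    by_cases h : i = j
    · subst h; rfl
    · simp only [pderiv_monomial]
      rw [tsub_tsub, tsub_tsub, add_comm (Finsupp.single j 1)]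
      congr 1
      have h1 : ((s - Finsupp.single j 1 : σ →₀ ℕ)) i = s i := by
        simp [Finsupp.tsub_apply, Finsupp.single_apply, h, Ne.symm h]
      have h2 : ((s - Finsupp.single i 1 : σ →₀ ℕ)) j = s j := by
        simp [Finsupp.tsub_apply, Finsupp.single_apply, h, Ne.symm h]
      rw [h1, h2]; ring

theorem X_mul_pd_monomial {σ : Type*} [DecidableEq σ] (j : σ) (s : σ →₀ ℕ) (c : ℝ) :
    X j * pderiv j (monomial s c) = monomial s (c * s j) := by
  rw [pderiv_monomial, X, monomial_mul]
  by_cases h : s j = 0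
  · simp [h]
  · rw [add_tsub_cancel_of_le]
    · ring_nf
    · rw [Finsupp.single_le_iff]
      omega

theorem coeff_X_mul_pd {σ : Type*} [DecidableEq σ] (j : σ) (m : σ →₀ ℕ) (f : MvPolynomial σ ℝ) :
    coeff m (X j * pderiv j f) = (m j : ℝ) * coeff m f := by
  induction f using MvPolynomial.induction_on' with
  | add p q hp hq => simp [mul_add, hp, hq]
  | monomial s c =>
    rw [X_mul_pd_monomial, coeff_monomial, coeff_monomial]
    by_cases h : s = m
    · subst h; simp; ring
    · simp [h]

theorem homog_coeff {N : ℕ} (r : Fin N → ℕ) {av : ℤ} {V : VF N} (hV : IsHomog r av V)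
    (j : Fin N) (m : Fin N →₀ ℕ) (hm : coeff m (V j) ≠ 0) :
    (∑ t, (r t : ℝ) * m t) = (av : ℝ) + r j := by
  have h := congrFun hV j
  simp only [bracket, nabla] at h
  have h2 := congrArg (coeff m) h
  rw [coeff_sum] at h2
  have hterm : ∀ t : Fin N, coeff m ((r t : MvPolynomial (Fin N) ℝ) * X t * pderiv t (V j)
      - V t * pderiv t ((r j : MvPolynomial (Fin N) ℝ) * X j))
      = (r t : ℝ) * m t * coeff m (V j) - (if j = t then (r j : ℝ) * coeff m (V t) else 0) := by
    intro t
    rw [coeff_sub, ← C_eq_coe_nat, mul_assoc, coeff_C_mul, coeff_X_mul_pd,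
      ← C_eq_coe_nat (r j), pderiv_C_mul]
    congr 1
    · ring
    · by_cases ht : j = t
      · subst ht; rw [pderiv_X_self, mul_one, if_pos rfl, mul_comm (V j), coeff_C_mul]
      · rw [pderiv_X_of_ne ht]
        simp [ht]
  rw [Finset.sum_congr rfl (fun t _ => hterm t)] at h2
  rw [Finset.sum_sub_distrib, Finset.sum_ite_eq, coeff_smul] at h2
  simp only [Finset.mem_univ, if_true, ← Finset.sum_mul, smul_eq_mul] at h2
  apply mul_right_cancel₀ hm
  rw [add_mul]
  linarith

theorem homog_pd_zero {N : ℕ} {r : Fin N → ℕ} {av : ℤ} {V : VF N} (hV : IsHomog r av V)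
    (hav : av < 0) {i j : Fin N} (hle : r j ≤ r i) : pderiv i (V j) = 0 := by
  conv_lhs => rw [← support_sum_monomial_coeff (V j)]
  rw [map_sum]
  apply Finset.sum_eq_zero
  intro m hm
  have h1 := homog_coeff r hV j m (mem_support_iff.mp hm)
  have hmi : m i = 0 := by
    by_contra hne
    have hm1 : (1:ℝ) ≤ m i := by exact_mod_cast Nat.one_le_iff_ne_zero.mpr hne
    have h2 : (r i : ℝ) * 1 ≤ (r i : ℝ) * m i :=
      mul_le_mul_of_nonneg_left hm1 (by positivity)
    have h3 : (r i : ℝ) * m i ≤ ∑ t, (r t : ℝ) * m t :=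
      Finset.single_le_sum (f := fun t => (r t : ℝ) * m t)
        (fun t _ => by positivity) (Finset.mem_univ i)
    have h4 : (av : ℝ) ≤ -1 := by exact_mod_cast (by omega : av ≤ -1)
    have h5 : (r j : ℝ) ≤ r i := by exact_mod_cast hle
    linarith
  rw [pderiv_monomial, hmi]
  simp

/-- The explicit formula for the map `D`. -/
noncomputable def Emap {N : ℕ} (a : Fin N → Fin N → ℝ) (L : Fin N) (V : VF N) : VF N :=
  fun k => ∑ i, C (a i k) * pderiv i (V L)

theorem Emap_add {N : ℕ} (a : Fin N → Fin N → ℝ) (L : Fin N) (V W : VF N) :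
    Emap a L (V + W) = Emap a L V + Emap a L W := by
  funext k
  simp [Emap, mul_add, Finset.sum_add_distrib]

theorem Emap_smul {N : ℕ} (a : Fin N → Fin N → ℝ) (L : Fin N) (c : ℝ) (V : VF N) :
    Emap a L (c • V) = c • Emap a L V := by
  funext k
  simp only [Emap, Pi.smul_apply, smul_eq_C_mul, pderiv_C_mul, Finset.mul_sum]
  exact Finset.sum_congr rfl fun i _ => by ring

theorem Emap_zero {N : ℕ} (a : Fin N → Fin N → ℝ) (L : Fin N) :
    Emap a L (0 : VF N) = 0 := by
  funext k
  simp [Emap]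

theorem bracket_add_left {N : ℕ} (V V' W : VF N) :
    bracket (V + V') W = bracket V W + bracket V' W := by
  funext i
  simp only [bracket, Pi.add_apply, map_add]
  rw [← Finset.sum_add_distrib]
  exact Finset.sum_congr rfl fun j _ => by ring

theorem bracket_add_right {N : ℕ} (V W W' : VF N) :
    bracket V (W + W') = bracket V W + bracket V W' := by
  funext i
  simp only [bracket, Pi.add_apply, map_add]
  rw [← Finset.sum_add_distrib]
  exact Finset.sum_congr rfl fun j _ => by ring

theorem bracket_smul_left {N : ℕ} (c : ℝ) (V W : VF N) :
    bracket (c • V) W = c • bracket V W := by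
  funext i
  simp only [bracket, Pi.smul_apply, smul_eq_C_mul, pderiv_C_mul, Finset.mul_sum]
  exact Finset.sum_congr rfl fun j _ => by ring

theorem bracket_smul_right {N : ℕ} (c : ℝ) (V W : VF N) :
    bracket V (c • W) = c • bracket V W := by
  funext i
  simp only [bracket, Pi.smul_apply, smul_eq_C_mul, pderiv_C_mul, Finset.mul_sum]
  exact Finset.sum_congr rfl fun j _ => by ring

theorem bracket_zero_left {N : ℕ} (W : VF N) : bracket (0 : VF N) W = 0 := by
  funext i; simp [bracket]

theorem bracket_zero_right {N : ℕ} (V : VF N) : bracket V (0 : VF N) = 0 := by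
  funext i; simp [bracket]

/-- Key computation: the derivation identity for `Emap` on homogeneous fields of
negative weight. -/
theorem Emap_key {n : ℕ} (r : Fin (n + 2) → ℕ) (hmono : Monotone r)
    (a : Fin (n + 2) → Fin (n + 2) → ℝ)
    (hsymm : ∀ i j, a i j = a j i)
    (hsupp : ∀ i j, a i j ≠ 0 →
      r i = r (⟨n, Nat.lt_succ_of_lt (Nat.lt_succ_self n)⟩ : Fin (n + 2)) ∧ r j = r (⟨n, Nat.lt_succ_of_lt (Nat.lt_succ_self n)⟩ : Fin (n + 2)) ∧
      i ≠ Fin.last (n + 1) ∧ j ≠ Fin.last (n + 1))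
    {av aw : ℤ} {V W : VF (n + 2)} (havn : av < 0) (hawn : aw < 0)
    (hV : IsHomog r av V) (hW : IsHomog r aw W) :
    Emap a (Fin.last (n + 1)) (bracket V W)
      = bracket (Emap a (Fin.last (n + 1)) V) W
        + bracket V (Emap a (Fin.last (n + 1)) W) := by
  set L : Fin (n + 2) := Fin.last (n + 1) with hL
  set p : Fin (n + 2) := ⟨n, by omega⟩ with hp
  have pdV : ∀ i j : Fin (n + 2), r j ≤ r i → pderiv i (V j) = 0 :=
    fun i j h => homog_pd_zero hV havn h
  have pdW : ∀ i j : Fin (n + 2), r j ≤ r i → pderiv i (W j) = 0 :=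
    fun i j h => homog_pd_zero hW hawn h
  have hjL : ∀ j : Fin (n + 2), j ≠ L → r j ≤ r p := by
    intro j hj
    apply hmono
    rw [Fin.le_def]
    have : (j : ℕ) < n + 1 := by
      rcases Fin.lt_or_eq_of_le (Fin.le_last j) with h | h
      · exact h
      · exact absurd h hj
    exact Nat.lt_succ_iff.mp this
  funext k
  -- the common middle form
  set M : MvPolynomial (Fin (n + 2)) ℝ :=
    ∑ i, ∑ j, C (a i k) * (V j * pderiv j (pderiv i (W L))
      - W j * pderiv j (pderiv i (V L))) with hM
  have lhs_eq : Emap a L (bracket V W) k = M := by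
    show (∑ i, C (a i k) * pderiv i (bracket V W L)) = M
    refine Finset.sum_congr rfl fun i _ => ?_
    rw [show bracket V W L = ∑ j, (V j * pderiv j (W L) - W j * pderiv j (V L)) from rfl,
      map_sum, Finset.mul_sum]
    refine Finset.sum_congr rfl fun j _ => ?_
    by_cases hai : a i k = 0
    · simp [hai]
    · obtain ⟨hri, -, hiL, hkL⟩ := hsupp i k hai
      have e1 : pderiv i (V j) * pderiv j (W L) = 0 := by
        by_cases hj : j = L
        · subst hj; rw [pdW L L le_rfl, mul_zero]
        · rw [pdV i j (le_trans (hjL j hj) (le_of_eq hri.symm)), zero_mul]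
      have e2 : pderiv i (W j) * pderiv j (V L) = 0 := by
        by_cases hj : j = L
        · subst hj; rw [pdV L L le_rfl, mul_zero]
        · rw [pdW i j (le_trans (hjL j hj) (le_of_eq hri.symm)), zero_mul]
      rw [map_sub, pderiv_mul, pderiv_mul, e1, e2, zero_add, zero_add,
        pd_comm i j (W L), pd_comm i j (V L)]
  have pdE : ∀ (U : VF (n + 2)) (j k' : Fin (n + 2)),
      pderiv j (Emap a L U k') = ∑ i, C (a i k') * pderiv j (pderiv i (U L)) := by
    intro U j k'
    rw [show Emap a L U k' = ∑ i, C (a i k') * pderiv i (U L) from rfl, map_sum]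
    exact Finset.sum_congr rfl fun i _ => pderiv_C_mul
  have rhs_eq : bracket (Emap a L V) W k + bracket V (Emap a L W) k = M := by
    have expand : bracket (Emap a L V) W k + bracket V (Emap a L W) k
        = ∑ j, ∑ i, ((C (a i j) * pderiv i (V L) * pderiv j (W k)
            - C (a i j) * pderiv i (W L) * pderiv j (V k))
          + C (a i k) * (V j * pderiv j (pderiv i (W L))
            - W j * pderiv j (pderiv i (V L)))) := by
      show (∑ j, (Emap a L V j * pderiv j (W k) - W j * pderiv j (Emap a L V k)))
          + (∑ j, (V j * pderiv j (Emap a L W k) - Emap a L W j * pderiv j (V k))) = _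
      rw [← Finset.sum_add_distrib]
      refine Finset.sum_congr rfl fun j _ => ?_
      rw [pdE V j k, pdE W j k,
        show Emap a L V j = ∑ i, C (a i j) * pderiv i (V L) from rfl,
        show Emap a L W j = ∑ i, C (a i j) * pderiv i (W L) from rfl,
        Finset.sum_mul, Finset.sum_mul, Finset.mul_sum, Finset.mul_sum,
        ← Finset.sum_sub_distrib, ← Finset.sum_sub_distrib, ← Finset.sum_add_distrib]
      refine Finset.sum_congr rfl fun i _ => ?_
      ring
    rw [expand]
    simp only [Finset.sum_add_distrib]
    have hT : (∑ j, ∑ i, (C (a i j) * pderiv i (V L) * pderiv j (W k)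
        - C (a i j) * pderiv i (W L) * pderiv j (V k))) = 0 := by
      have hterm : ∀ i j : Fin (n + 2),
          C (a i j) * pderiv i (V L) * pderiv j (W k)
            = C (a j i) * pderiv j (W L) * pderiv i (V k) := by
        intro i j
        by_cases ha : a i j = 0
        · rw [ha, hsymm j i, ha]; simp
        · obtain ⟨hri, hrj, hiL, hjL'⟩ := hsupp i j ha
          by_cases hk : k = L
          · subst hk
            rw [hsymm j i]; ring
          · rw [pdW j k (le_trans (hjL k hk) (le_of_eq hrj.symm)),
              pdV i k (le_trans (hjL k hk) (le_of_eq hri.symm))]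
            simp
      simp only [Finset.sum_sub_distrib]
      rw [sub_eq_zero]
      rw [Finset.sum_congr rfl (fun j _ => Finset.sum_congr rfl (fun i _ => hterm i j))]
      rw [Finset.sum_comm]
    rw [hT, zero_add, hM]
    rw [Finset.sum_comm]
  rw [show (bracket (Emap a L V) W + bracket V (Emap a L W)) k
      = bracket (Emap a L V) W k + bracket V (Emap a L W) k from rfl]
  rw [lhs_eq, rhs_eq]

/-- Let `ℓ = rₙ - 2rₙ₋₁ ≥ 0` and let `A = (aᵢʲ)` be a nonzero
symmetric matrix with `aᵢʲ = 0` unless `rᵢ = rⱼ = rₙ₋₁`. Then the unique linear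
(weight-`ℓ`) map `D = D_ℓ^A` vanishing on constant vector fields, with
`D(xᵢ∂ⱼ) = δⱼⁿ Σₖ aᵢᵏ ∂ₖ` on linear vector fields, and satisfying the multiplicative
rule `D(fg∂ⱼ) = f·D(g∂ⱼ) + g·D(f∂ⱼ)`, is a derivation of `𝔪 = g₋(h)`. -/
theorem DlA_is_derivation
    (n : ℕ) (r : Fin (n + 2) → ℕ) (hr : ∀ i, 0 < r i) (hmono : Monotone r)
    (hℓ : 0 ≤ (r (Fin.last (n + 1)) : ℤ) - 2 * (r (⟨n, by omega⟩ : Fin (n + 2)) : ℤ))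
    (a : Fin (n + 2) → Fin (n + 2) → ℝ)
    (hsymm : ∀ i j, a i j = a j i)
    (hsupp : ∀ i j, a i j ≠ 0 →
      r i = r (⟨n, by omega⟩ : Fin (n + 2)) ∧ r j = r (⟨n, by omega⟩ : Fin (n + 2)) ∧
      i ≠ Fin.last (n + 1) ∧ j ≠ Fin.last (n + 1))
    (hA : ∃ i j, a i j ≠ 0)
    (D : VF (n + 2) → VF (n + 2))
    (hadd : ∀ V W, D (V + W) = D V + D W)
    (hsmul : ∀ (c : ℝ) V, D (c • V) = c • D V)
    (hconst : ∀ i, D (coordVF i) = 0)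
    (hlinval : ∀ i j : Fin (n + 2),
      D (vfOf (X i) j) = if j = Fin.last (n + 1) then (fun k => C (a i k)) else 0)
    (hmul : ∀ (f g : MvPolynomial (Fin (n + 2)) ℝ) (j : Fin (n + 2)),
      D (vfOf (f * g) j) = (fun k => f * D (vfOf g j) k + g * D (vfOf f j) k))
    : ∀ V ∈ negPart r, ∀ W ∈ negPart r,
      D (bracket V W) = bracket (D V) W + bracket V (D W) := by
  classical
  have hD0 : D 0 = 0 := by
    have := hsmul 0 0
    simpa using this
  have hvf : ∀ (f : MvPolynomial (Fin (n + 2)) ℝ) (j : Fin (n + 2)),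
      D (vfOf f j) = fun k =>
        if j = Fin.last (n + 1) then ∑ i, C (a i k) * pderiv i f else 0 := by
    intro f j
    induction f using MvPolynomial.induction_on with
    | C c =>
      have hv : vfOf (C c : MvPolynomial (Fin (n + 2)) ℝ) j = c • coordVF j := by
        funext k
        by_cases h : k = j <;> simp [vfOf, coordVF, h, smul_eq_C_mul]
      rw [hv, hsmul, hconst, smul_zero]
      funext k
      simp [pderiv_C]
    | add p q hp hq =>
      have hv : vfOf (p + q) j = vfOf p j + vfOf q j := by
        funext k; by_cases h : k = j <;> simp [vfOf, h]
      rw [hv, hadd, hp, hq]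
      funext k
      by_cases h : j = Fin.last (n + 1) <;>
        simp [h, mul_add, Finset.sum_add_distrib]
    | mul_X p i hp =>
      rw [hmul p (X i) j, hlinval i j, hp]
      funext k
      by_cases h : j = Fin.last (n + 1)
      · simp only [h, if_pos rfl]
        simp only [pderiv_mul, mul_add, Finset.sum_add_distrib, pderiv_X,
          Pi.single_apply, mul_ite, mul_one, mul_zero, Finset.sum_ite_eq',
          Finset.mem_univ, if_true]
        rw [Finset.sum_ite_eq]
        simp only [Finset.mem_univ, if_true, Finset.mul_sum]
        rw [add_comm (p * C (a i k))]
        exact congrArg₂ (· + ·) (Finset.sum_congr rfl fun t _ => by ring) (by ring)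
      · simp [h]
  have hDsum : ∀ (g : Fin (n + 2) → VF (n + 2)), D (∑ j, g j) = ∑ j, D (g j) := by
    intro g
    have key : ∀ s : Finset (Fin (n + 2)),
        D (∑ j ∈ s, g j) = ∑ j ∈ s, D (g j) := by
      intro s
      induction s using Finset.induction_on with
      | empty => simpa using hD0
      | insert x t h ih =>
        rw [Finset.sum_insert h, hadd, ih, Finset.sum_insert h]
    exact key _
  have hDeq : ∀ U : VF (n + 2), D U = Emap a (Fin.last (n + 1)) U := by
    intro U
    have hU : U = ∑ j, vfOf (U j) j := by
      funext k
      rw [Finset.sum_apply]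
      simp [vfOf, Finset.sum_ite_eq]
    conv_lhs => rw [hU]
    rw [hDsum, Finset.sum_congr rfl (fun j _ => hvf (U j) j)]
    funext k
    rw [Finset.sum_apply]
    show (∑ j, if j = Fin.last (n + 1)
        then ∑ i, C (a i k) * pderiv i (U j) else 0)
      = ∑ i, C (a i k) * pderiv i (U (Fin.last (n + 1)))
    simp [Finset.sum_ite_eq']
  intro V hVmem W hWmem
  rw [hDeq (bracket V W), hDeq V, hDeq W]
  have hVmem' : V ∈ Submodule.span ℝ {V : VF (n + 2) | ∃ k : ℤ, k < 0 ∧ IsHomog r k V} :=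
    hVmem
  have hWmem' : W ∈ Submodule.span ℝ {V : VF (n + 2) | ∃ k : ℤ, k < 0 ∧ IsHomog r k V} :=
    hWmem
  set L : Fin (n + 2) := Fin.last (n + 1)
  refine Submodule.span_induction₂
    (p := fun x y _ _ => Emap a L (bracket x y)
      = bracket (Emap a L x) y + bracket x (Emap a L y))
    ?_ ?_ ?_ ?_ ?_ ?_ ?_ hVmem' hWmem'
  · rintro x y ⟨av, havn, hVh⟩ ⟨aw, hawn, hWh⟩
    exact Emap_key r hmono a hsymm hsupp havn hawn hVh hWh
  · intro y _
    simp [bracket_zero_left, Emap_zero]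
  · intro x _
    simp [bracket_zero_right, Emap_zero, bracket_zero_left]
  · intro x y z _ _ _ h1 h2
    rw [bracket_add_left, Emap_add, h1, h2, Emap_add, bracket_add_left,
      bracket_add_left]
    abel
  · intro x y z _ _ _ h1 h2
    rw [bracket_add_right, Emap_add, h1, h2, Emap_add, bracket_add_right,
      bracket_add_right]
    abel
  · intro c x y _ _ h
    rw [bracket_smul_left, Emap_smul, h, Emap_smul, bracket_smul_left,
      bracket_smul_left, smul_add]
  · intro c x y _ _ h
    rw [bracket_smul_right, Emap_smul, h, Emap_smul, bracket_smul_right,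
      bracket_smul_right, smul_add]
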